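/- Extendibility for disjunctive variable elimination (Lemma 3 of the paper): let Π_i be a finite set of constraints (each a finite disjunction of linear inequalities) over variables x_1,…,x_i. Partition Π_i into Π_i^+ (positive occurrences of x_i only), Π_i^- (negative occurrences only), Π_i^± (both), and constraints without x_i. Define Π_i^{++} as the closure of Π_i^+ under CP resolution on x_i against members of Π_i^± (iterated at most |Π_i^±| times), and define Π_{i-1} as the constraints of Π_i not containing x_i together with all CP-resolvents CPres_i(Ψ, Ψ') with Ψ ∈ Π_i^{++}, Ψ' ∈ Π_i^-. Then: (a) Π_i is satisfiable iff Π_{i-1} is satisfiable, and (b) every assignment to x_1,…,x_{i-1} satisfying Π_{i-1} extends by a value of x_i to an assignment satisfying Π_i. -/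

import Mathlib

open scoped Classical

namespace DisjElim

/-- A linear inequality `∑ k, w k * x k + b ≥ 0` over the variables `x_1, …, x_D`. -/
structure Ineq (D : ℕ) where
  w : Fin D → ℝ
  b : ℝ

/-- The value of the linear expression of an inequality at a point. -/
def Ineq.eval {D : ℕ} (ι : Ineq D) (x : Fin D → ℝ) : ℝ := ∑ k, ι.w k * x k + ι.b

/-- A constraint: a finite disjunction of linear inequalities. -/
abbrev Constraint (D : ℕ) := Finset (Ineq D)

/-- `x` satisfies a constraint iff it satisfies some disjunct. -/
def Constraint.Sat {D : ℕ} (C : Constraint D) (x : Fin D → ℝ) : Prop :=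
  ∃ ι ∈ C, ι.eval x ≥ 0

/-- `x` satisfies a set of constraints iff it satisfies every constraint in the set. -/
def SatAll {D : ℕ} (Pi : Finset (Constraint D)) (x : Fin D → ℝ) : Prop :=
  ∀ C ∈ Pi, C.Sat x

/-- The variable `x_i` occurs positively in the constraint. -/
def hasPos {D : ℕ} (i : Fin D) (C : Constraint D) : Prop := ∃ ι ∈ C, 0 < ι.w i

/-- The variable `x_i` occurs negatively in the constraint. -/
def hasNeg {D : ℕ} (i : Fin D) (C : Constraint D) : Prop := ∃ ι ∈ C, ι.w i < 0

/-- The CP resolution rule on `x_i` between `Ψ` (whose positive-occurrence disjuncts are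
resolved) and `Ψ'` (whose negative-occurrence disjuncts are resolved): the disjunction of
all resolvents `φ/w_i(Ψ-part) - φ'/w'_i(Ψ'-part) ≥ 0` together with the remaining
disjuncts `Φ` of `Ψ` and `Φ'` of `Ψ'`. -/
noncomputable def CPres {D : ℕ} (i : Fin D) (Ψ Ψ' : Constraint D) : Constraint D :=
  ((Ψ.filter (fun ι => 0 < ι.w i)) ×ˢ (Ψ'.filter (fun ι => ι.w i < 0))).image
    (fun p => (⟨fun k => p.1.w k / p.1.w i - p.2.w k / p.2.w i,
                p.1.b / p.1.w i - p.2.b / p.2.w i⟩ : Ineq D))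
    ∪ Ψ.filter (fun ι => ¬ 0 < ι.w i) ∪ Ψ'.filter (fun ι => ¬ ι.w i < 0)

/-- `Π_i^+`: constraints with positive and without negative occurrences of `x_i`. -/
noncomputable def posPart {D : ℕ} (i : Fin D) (Pi : Finset (Constraint D)) :
    Finset (Constraint D) :=
  Pi.filter (fun C => hasPos i C ∧ ¬ hasNeg i C)

/-- `Π_i^-`: constraints with negative and without positive occurrences of `x_i`. -/
noncomputable def negPart {D : ℕ} (i : Fin D) (Pi : Finset (Constraint D)) :
    Finset (Constraint D) :=
  Pi.filter (fun C => ¬ hasPos i C ∧ hasNeg i C)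

/-- `Π_i^±`: constraints with both positive and negative occurrences of `x_i`. -/
noncomputable def mixPart {D : ℕ} (i : Fin D) (Pi : Finset (Constraint D)) :
    Finset (Constraint D) :=
  Pi.filter (fun C => hasPos i C ∧ hasNeg i C)

/-- Constraints in which `x_i` does not occur. -/
noncomputable def freePart {D : ℕ} (i : Fin D) (Pi : Finset (Constraint D)) :
    Finset (Constraint D) :=
  Pi.filter (fun C => ¬ hasPos i C ∧ ¬ hasNeg i C)

/-- `Π_i^k`: the `k`-fold CP resolution of `Π_i^+` against the mixed part `Π_i^±`. -/
noncomputable def iterRes {D : ℕ} (i : Fin D) (pm : Finset (Constraint D))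
    (p0 : Finset (Constraint D)) : ℕ → Finset (Constraint D)
  | 0 => p0
  | k + 1 => ((iterRes i pm p0 k) ×ˢ pm).image (fun p => CPres i p.1 p.2)

/-- `Π_i^{++} = ⋃_{k=0}^{|Π_i^±|} Π_i^k`. -/
noncomputable def closurePlus {D : ℕ} (i : Fin D) (Pi : Finset (Constraint D)) :
    Finset (Constraint D) :=
  (Finset.range ((mixPart i Pi).card + 1)).biUnion
    (fun k => iterRes i (mixPart i Pi) (posPart i Pi) k)

/-- One step of disjunctive variable elimination:
`Π_{i-1} = (Π_i` minus all constraints containing `x_i) ∪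
{CPres_i(Ψ, Ψ') : Ψ ∈ Π_i^{++}, Ψ' ∈ Π_i^-}`. -/
noncomputable def elimVar {D : ℕ} (i : Fin D) (Pi : Finset (Constraint D)) :
    Finset (Constraint D) :=
  freePart i Pi ∪ ((closurePlus i Pi) ×ˢ (negPart i Pi)).image (fun p => CPres i p.1 p.2)

end DisjElim


namespace DisjElim2

open DisjElim

variable {D : ℕ}

/-- resolvent of two inequalities -/
noncomputable def res (i : Fin D) (a b : Ineq D) : Ineq D :=
  ⟨fun k => a.w k / a.w i - b.w k / b.w i, a.b / a.w i - b.b / b.w i⟩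

lemma CPres_eq (i : Fin D) (Ψ Ψ' : Constraint D) :
    CPres i Ψ Ψ' =
      ((Ψ.filter (fun ι => 0 < ι.w i)) ×ˢ (Ψ'.filter (fun ι => ι.w i < 0))).image
        (fun p => res i p.1 p.2)
      ∪ Ψ.filter (fun ι => ¬ 0 < ι.w i) ∪ Ψ'.filter (fun ι => ¬ ι.w i < 0) := rfl

lemma mem_CPres {i : Fin D} {Ψ Ψ' : Constraint D} {c : Ineq D} (h : c ∈ CPres i Ψ Ψ') :
    (∃ a ∈ Ψ, ∃ b ∈ Ψ', 0 < a.w i ∧ b.w i < 0 ∧ c = res i a b) ∨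
    (c ∈ Ψ ∧ ¬ 0 < c.w i) ∨ (c ∈ Ψ' ∧ ¬ c.w i < 0) := by
  rw [CPres_eq] at h
  rcases Finset.mem_union.1 h with h | h
  · rcases Finset.mem_union.1 h with h | h
    · obtain ⟨p, hp, rfl⟩ := Finset.mem_image.1 h
      obtain ⟨hp1, hp2⟩ := Finset.mem_product.1 hp
      obtain ⟨ha, hwa⟩ := Finset.mem_filter.1 hp1
      obtain ⟨hb, hwb⟩ := Finset.mem_filter.1 hp2
      exact Or.inl ⟨p.1, ha, p.2, hb, hwa, hwb, rfl⟩
    · exact Or.inr (Or.inl (Finset.mem_filter.1 h))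
  · exact Or.inr (Or.inr (Finset.mem_filter.1 h))

lemma res_mem_CPres {i : Fin D} {Ψ Ψ' : Constraint D} {a b : Ineq D}
    (ha : a ∈ Ψ) (hb : b ∈ Ψ') (hwa : 0 < a.w i) (hwb : b.w i < 0) :
    res i a b ∈ CPres i Ψ Ψ' := by
  rw [CPres_eq]
  refine Finset.mem_union.2 (Or.inl (Finset.mem_union.2 (Or.inl ?_)))
  exact Finset.mem_image.2 ⟨(a, b), Finset.mem_product.2
    ⟨Finset.mem_filter.2 ⟨ha, hwa⟩, Finset.mem_filter.2 ⟨hb, hwb⟩⟩, rfl⟩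

lemma left_mem_CPres {i : Fin D} {Ψ Ψ' : Constraint D} {a : Ineq D}
    (ha : a ∈ Ψ) (hwa : ¬ 0 < a.w i) : a ∈ CPres i Ψ Ψ' := by
  rw [CPres_eq]
  exact Finset.mem_union.2 (Or.inl (Finset.mem_union.2 (Or.inr (Finset.mem_filter.2 ⟨ha, hwa⟩))))

lemma right_mem_CPres {i : Fin D} {Ψ Ψ' : Constraint D} {b : Ineq D}
    (hb : b ∈ Ψ') (hwb : ¬ b.w i < 0) : b ∈ CPres i Ψ Ψ' := by
  rw [CPres_eq]
  exact Finset.mem_union.2 (Or.inr (Finset.mem_filter.2 ⟨hb, hwb⟩))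

lemma res_eval (i : Fin D) (a b : Ineq D) (y : Fin D → ℝ) :
    (res i a b).eval y = a.eval y / a.w i - b.eval y / b.w i := by
  simp only [res, Ineq.eval, sub_mul, div_mul_eq_mul_div, add_div,
    Finset.sum_sub_distrib, Finset.sum_div]
  ring

lemma eval_update (i : Fin D) (ι : Ineq D) (x : Fin D → ℝ) (t : ℝ) :
    ι.eval (Function.update x i t) = ι.w i * t + ι.eval (Function.update x i 0) := by
  unfold Ineq.eval
  have h : ∀ k, ι.w k * Function.update x i t k
      = (if k = i then ι.w i * t else 0) + ι.w k * Function.update x i 0 k := by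
    intro k
    by_cases hk : k = i
    · subst hk; simp
    · simp [Function.update_of_ne hk, hk]
  rw [Finset.sum_congr rfl (fun k _ => h k), Finset.sum_add_distrib,
    Finset.sum_ite_eq' Finset.univ i (fun _ => ι.w i * t)]
  simp [add_assoc]

lemma eval_update_zero (i : Fin D) {ι : Ineq D} (x : Fin D → ℝ) (t : ℝ)
    (hw : ι.w i = 0) :
    ι.eval (Function.update x i t) = ι.eval x := by
  conv_rhs => rw [← Function.update_eq_self i x]
  rw [eval_update i ι x t, eval_update i ι x (x i), hw]
  ring_nf

/-- soundness of CP resolution -/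
lemma CPres_sound {i : Fin D} {Ψ Ψ' : Constraint D} {y : Fin D → ℝ}
    (h1 : Ψ.Sat y) (h2 : Ψ'.Sat y) : (CPres i Ψ Ψ').Sat y := by
  obtain ⟨a, ha, hae⟩ := h1
  obtain ⟨b, hb, hbe⟩ := h2
  by_cases hwa : 0 < a.w i
  · by_cases hwb : b.w i < 0
    · refine ⟨res i a b, res_mem_CPres ha hb hwa hwb, ?_⟩
      rw [res_eval]
      have h1' : 0 ≤ a.eval y / a.w i := div_nonneg hae hwa.le
      have h2' : b.eval y / b.w i ≤ 0 := div_nonpos_of_nonneg_of_nonpos hbe hwb.le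
      linarith
    · exact ⟨b, right_mem_CPres hb hwb, hbe⟩
  · exact ⟨a, left_mem_CPres ha hwa, hae⟩

section Fixed

variable (i : Fin D) (x : Fin D → ℝ)

/-- threshold value of an inequality at `x` -/
noncomputable def rho (ι : Ineq D) : ℝ := -(ι.eval (Function.update x i 0)) / ι.w i

/-- `C` has a satisfied `x_i`-free disjunct -/
def sat0 (C : Constraint D) : Prop :=
  ∃ ι ∈ C, ι.w i = 0 ∧ 0 ≤ ι.eval (Function.update x i 0)

noncomputable def lbF (C : Constraint D) : ℝ :=
  if h : (C.filter (fun ι => 0 < ι.w i)).Nonempty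
  then (C.filter (fun ι => 0 < ι.w i)).inf' h (rho i x) else 0

noncomputable def ubF (C : Constraint D) : ℝ :=
  if h : (C.filter (fun ι => ι.w i < 0)).Nonempty
  then (C.filter (fun ι => ι.w i < 0)).sup' h (rho i x) else 0

lemma sat_pos {ι : Ineq D} (hw : 0 < ι.w i) (t : ℝ) :
    0 ≤ ι.eval (Function.update x i t) ↔ rho i x ι ≤ t := by
  rw [eval_update, rho, div_le_iff₀ hw]
  constructor <;> intro h <;> nlinarith

lemma sat_neg {ι : Ineq D} (hw : ι.w i < 0) (t : ℝ) :
    0 ≤ ι.eval (Function.update x i t) ↔ t ≤ rho i x ι := by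
  rw [eval_update, rho, le_div_iff_of_neg hw]
  constructor <;> intro h <;> nlinarith

lemma lbF_le {C : Constraint D} {ι : Ineq D} (hι : ι ∈ C) (hw : 0 < ι.w i) :
    lbF i x C ≤ rho i x ι := by
  have hmem : ι ∈ C.filter (fun ι => 0 < ι.w i) := Finset.mem_filter.2 ⟨hι, hw⟩
  rw [lbF, dif_pos ⟨ι, hmem⟩]
  exact Finset.inf'_le _ hmem

lemma exists_lbF {C : Constraint D} (h : hasPos i C) :
    ∃ ι ∈ C, 0 < ι.w i ∧ rho i x ι = lbF i x C := by
  obtain ⟨ι, hι, hw⟩ := h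
  have hne : (C.filter (fun ι => 0 < ι.w i)).Nonempty := ⟨ι, Finset.mem_filter.2 ⟨hι, hw⟩⟩
  obtain ⟨b, hb, hbeq⟩ := Finset.exists_mem_eq_inf' hne (rho i x)
  obtain ⟨hbC, hbw⟩ := Finset.mem_filter.1 hb
  exact ⟨b, hbC, hbw, by rw [lbF, dif_pos hne, hbeq]⟩

lemma le_ubF {C : Constraint D} {ι : Ineq D} (hι : ι ∈ C) (hw : ι.w i < 0) :
    rho i x ι ≤ ubF i x C := by
  have hmem : ι ∈ C.filter (fun ι => ι.w i < 0) := Finset.mem_filter.2 ⟨hι, hw⟩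
  rw [ubF, dif_pos ⟨ι, hmem⟩]
  exact Finset.le_sup' _ hmem

lemma exists_ubF {C : Constraint D} (h : hasNeg i C) :
    ∃ ι ∈ C, ι.w i < 0 ∧ rho i x ι = ubF i x C := by
  obtain ⟨ι, hι, hw⟩ := h
  have hne : (C.filter (fun ι => ι.w i < 0)).Nonempty := ⟨ι, Finset.mem_filter.2 ⟨hι, hw⟩⟩
  obtain ⟨b, hb, hbeq⟩ := Finset.exists_mem_eq_sup' hne (rho i x)
  obtain ⟨hbC, hbw⟩ := Finset.mem_filter.1 hb
  exact ⟨b, hbC, hbw, by rw [ubF, dif_pos hne, hbeq]⟩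

end Fixed

/-- chain predicate: each element's upper bound is below the previous lower bound -/
def linked {α : Type*} (lb ub : α → ℝ) : ℝ → List α → Prop
  | _, [] => True
  | β, C :: l => ub C < β ∧ linked lb ub (lb C) l

/-- abstract infeasibility yields a descending chain -/
lemma chain_lemma {α : Type*} [DecidableEq α] (lb ub : α → ℝ) (N : Finset α) :
    ∀ (M P : Finset α),
      (¬ ∃ t : ℝ, (∀ C ∈ P, lb C ≤ t) ∧ (∀ C ∈ N, t ≤ ub C) ∧
        (∀ C ∈ M, t ≤ ub C ∨ lb C ≤ t)) →
      ∃ C₀ ∈ P, ∃ L : List α, (∀ C ∈ L, C ∈ M) ∧ L.Nodup ∧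
        ∃ Cn ∈ N, linked lb ub (lb C₀) (L ++ [Cn]) := by
  intro M
  induction M using Finset.strongInductionOn with
  | _ M ih =>
    intro P hinf
    have hNM : (N ∪ M).Nonempty := by
      by_contra h
      rw [Finset.not_nonempty_iff_eq_empty, Finset.union_eq_empty] at h
      apply hinf
      by_cases hP : P.Nonempty
      · exact ⟨P.sup' hP lb, fun C hC => Finset.le_sup' lb hC,
          fun C hC => by simp [h.1] at hC, fun C hC => by simp [h.2] at hC⟩
      · exact ⟨0, fun C hC => absurd ⟨C, hC⟩ hP,
          fun C hC => by simp [h.1] at hC, fun C hC => by simp [h.2] at hC⟩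
    obtain ⟨Cs, hCs, hCseq⟩ := Finset.exists_mem_eq_inf' hNM ub
    have hmin : ∀ C ∈ N ∪ M, ub Cs ≤ ub C := by
      intro C hC; rw [← hCseq]; exact Finset.inf'_le _ hC
    have hC0 : ∃ C₀ ∈ P, ub Cs < lb C₀ := by
      by_contra h
      push_neg at h
      exact hinf ⟨ub Cs, h, fun C hC => hmin C (Finset.mem_union_left _ hC),
        fun C hC => Or.inl (hmin C (Finset.mem_union_right _ hC))⟩
    obtain ⟨C₀, hC₀P, hlt⟩ := hC0
    rcases Finset.mem_union.1 hCs with hCsN | hCsM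
    · exact ⟨C₀, hC₀P, [], by simp, by simp, Cs, hCsN, hlt, trivial⟩
    · have hss : M.erase Cs ⊂ M := Finset.erase_ssubset hCsM
      have hinf' : ¬ ∃ t : ℝ, (∀ C ∈ insert Cs P, lb C ≤ t) ∧ (∀ C ∈ N, t ≤ ub C) ∧
          (∀ C ∈ M.erase Cs, t ≤ ub C ∨ lb C ≤ t) := by
        rintro ⟨t, h1, h2, h3⟩
        refine hinf ⟨t, fun C hC => h1 C (Finset.mem_insert_of_mem hC), h2, fun C hC => ?_⟩
        by_cases hc : C = Cs
        · exact Or.inr (hc ▸ h1 Cs (Finset.mem_insert_self _ _))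
        · exact h3 C (Finset.mem_erase.2 ⟨hc, hC⟩)
      obtain ⟨C₀', hC₀', L', hL'M, hnd, Cn, hCn, hlink⟩ := ih _ hss (insert Cs P) hinf'
      rcases Finset.mem_insert.1 hC₀' with rfl | hP
      · refine ⟨C₀, hC₀P, C₀' :: L', ?_, ?_, Cn, hCn, hlt, hlink⟩
        · intro C hC
          rcases List.mem_cons.1 hC with rfl | hC
          · exact hCsM
          · exact Finset.mem_of_mem_erase (hL'M C hC)
        · exact List.nodup_cons.2 ⟨fun hmem => (Finset.mem_erase.1 (hL'M _ hmem)).1 rfl, hnd⟩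
      · exact ⟨C₀', hP, L', fun C hC => Finset.mem_of_mem_erase (hL'M C hC), hnd, Cn, hCn, hlink⟩

end DisjElim2

namespace DisjElim2

open DisjElim

variable {D : ℕ}

lemma sat_iterRes {i : Fin D} {Pi : Finset (Constraint D)} {x : Fin D → ℝ}
    (hx : SatAll Pi x) :
    ∀ k, ∀ Ψ ∈ iterRes i (mixPart i Pi) (posPart i Pi) k, Ψ.Sat x := by
  intro k
  induction k with
  | zero =>
    intro Ψ hΨ
    exact hx Ψ (Finset.mem_of_mem_filter _ hΨ)
  | succ k ihk =>
    intro Ψ hΨ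
    obtain ⟨p, hp, rfl⟩ := Finset.mem_image.1 hΨ
    obtain ⟨h1, h2⟩ := Finset.mem_product.1 hp
    exact CPres_sound (ihk _ h1) (hx _ (Finset.mem_of_mem_filter _ h2))

lemma satAll_elimVar {i : Fin D} {Pi : Finset (Constraint D)} {x : Fin D → ℝ}
    (hx : SatAll Pi x) : SatAll (elimVar i Pi) x := by
  intro C hC
  rcases Finset.mem_union.1 hC with hC | hC
  · exact hx C (Finset.mem_of_mem_filter _ hC)
  · obtain ⟨p, hp, rfl⟩ := Finset.mem_image.1 hC
    obtain ⟨h1, h2⟩ := Finset.mem_product.1 hp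
    obtain ⟨k, _, h1'⟩ := Finset.mem_biUnion.1 h1
    exact CPres_sound (sat_iterRes hx k _ h1') (hx _ (Finset.mem_of_mem_filter _ h2))

/-- invariant for the chain construction: every disjunct of `Ψ` either is `x_i`-free and
falsified, or is a positive occurrence with threshold at least `β`. -/
def Inv (i : Fin D) (x : Fin D → ℝ) (Ψ : Constraint D) (β : ℝ) : Prop :=
  ∀ ι ∈ Ψ, (¬ 0 < ι.w i → ι.w i = 0 ∧ ι.eval (Function.update x i 0) < 0) ∧
    (0 < ι.w i → β ≤ rho i x ι)

lemma res_w_zero {i : Fin D} {a b : Ineq D} (hwa : 0 < a.w i) (hwb : b.w i < 0) :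
    (res i a b).w i = 0 := by
  simp only [res]
  rw [div_self hwa.ne', div_self hwb.ne]
  ring

lemma res_eval_rho {i : Fin D} (x : Fin D → ℝ) {a b : Ineq D}
    (hwa : a.w i ≠ 0) (hwb : b.w i ≠ 0) :
    (res i a b).eval (Function.update x i 0) = rho i x b - rho i x a := by
  rw [res_eval, rho, rho]
  ring

lemma no_chain {i : Fin D} {Pi : Finset (Constraint D)} {x : Fin D → ℝ}
    (hx : SatAll (elimVar i Pi) x) :
    ∀ (L : List (Constraint D)) (Ψ : Constraint D) (k : ℕ) (β : ℝ),
      Ψ ∈ iterRes i (mixPart i Pi) (posPart i Pi) k →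
      k + L.length ≤ (mixPart i Pi).card →
      Inv i x Ψ β →
      (∀ C ∈ L, C ∈ mixPart i Pi ∧ ¬ sat0 i x C) →
      ∀ Cn, Cn ∈ negPart i Pi → ¬ sat0 i x Cn →
      linked (lbF i x) (ubF i x) β (L ++ [Cn]) → False := by
  intro L
  induction L with
  | nil =>
    intro Ψ k β hΨ hk hInv _ Cn hCn hCn0 hlink
    obtain ⟨hub, -⟩ := hlink
    have hcp : Ψ ∈ closurePlus i Pi :=
      Finset.mem_biUnion.2 ⟨k, Finset.mem_range.2 (by omega), hΨ⟩
    have hmem : CPres i Ψ Cn ∈ elimVar i Pi := by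
      refine Finset.mem_union.2 (Or.inr (Finset.mem_image.2
        ⟨(Ψ, Cn), Finset.mem_product.2 ⟨hcp, hCn⟩, rfl⟩))
    obtain ⟨c, hc, hce⟩ := hx _ hmem
    rcases mem_CPres hc with ⟨a, ha, b, hb, hwa, hwb, rfl⟩ | ⟨hcΨ, hcw⟩ | ⟨hcC, hcw⟩
    · have hz : (res i a b).w i = 0 := res_w_zero hwa hwb
      rw [← eval_update_zero i x 0 hz, res_eval_rho x hwa.ne' hwb.ne] at hce
      have h1 : β ≤ rho i x a := (hInv a ha).2 hwa
      have h2 : rho i x b ≤ ubF i x Cn := le_ubF i x hb hwb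
      linarith
    · obtain ⟨hz, hlt⟩ := (hInv c hcΨ).1 hcw
      rw [← eval_update_zero i x 0 hz] at hce
      linarith
    · have hnp : ¬ hasPos i Cn := (Finset.mem_filter.1 hCn).2.1
      have hz : c.w i = 0 := by
        by_contra h
        rcases lt_or_gt_of_ne h with h' | h'
        · exact hcw h'
        · exact hnp ⟨c, hcC, h'⟩
      rw [← eval_update_zero i x 0 hz] at hce
      exact hCn0 ⟨c, hcC, hz, hce⟩
  | cons C L ihL =>
    intro Ψ k β hΨ hk hInv hL Cn hCn hCn0 hlink
    obtain ⟨hub, hlink'⟩ := hlink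
    obtain ⟨hCM, hC0⟩ := hL C List.mem_cons_self
    have hΨ' : CPres i Ψ C ∈ iterRes i (mixPart i Pi) (posPart i Pi) (k + 1) :=
      Finset.mem_image.2 ⟨(Ψ, C), Finset.mem_product.2 ⟨hΨ, hCM⟩, rfl⟩
    have hInv' : Inv i x (CPres i Ψ C) (lbF i x C) := by
      intro c hc
      rcases mem_CPres hc with ⟨a, ha, b, hb, hwa, hwb, rfl⟩ | ⟨hcΨ, hcw⟩ | ⟨hcC, hcw⟩
      · have hz : (res i a b).w i = 0 := res_w_zero hwa hwb
        refine ⟨fun _ => ⟨hz, ?_⟩, fun hpos => absurd hpos (by rw [hz]; exact lt_irrefl 0)⟩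
        rw [res_eval_rho x hwa.ne' hwb.ne]
        have h1 : β ≤ rho i x a := (hInv a ha).2 hwa
        have h2 : rho i x b ≤ ubF i x C := le_ubF i x hb hwb
        linarith
      · exact ⟨fun _ => (hInv c hcΨ).1 hcw, fun hpos => absurd hpos hcw⟩
      · refine ⟨fun hnp => ?_, fun hpos => lbF_le i x hcC hpos⟩
        have hz : c.w i = 0 := le_antisymm (not_lt.1 hnp) (not_lt.1 hcw)
        refine ⟨hz, ?_⟩
        by_contra h
        exact hC0 ⟨c, hcC, hz, not_lt.1 h⟩
    exact ihL (CPres i Ψ C) (k + 1) (lbF i x C) hΨ' (by simp only [List.length_cons] at hk; omega)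
      hInv' (fun C' hC' => hL C' (List.mem_cons_of_mem _ hC')) Cn hCn hCn0 hlink'

end DisjElim2

namespace DisjElim2

open DisjElim

variable {D : ℕ}

lemma extend {i : Fin D} {Pi : Finset (Constraint D)} {x : Fin D → ℝ}
    (hx : SatAll (elimVar i Pi) x) : ∃ t : ℝ, SatAll Pi (Function.update x i t) := by
  by_cases hfeas : ∃ t : ℝ,
      (∀ C ∈ (posPart i Pi).filter (fun C => ¬ sat0 i x C), lbF i x C ≤ t) ∧
      (∀ C ∈ (negPart i Pi).filter (fun C => ¬ sat0 i x C), t ≤ ubF i x C) ∧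
      (∀ C ∈ (mixPart i Pi).filter (fun C => ¬ sat0 i x C), t ≤ ubF i x C ∨ lbF i x C ≤ t)
  · obtain ⟨t, h1, h2, h3⟩ := hfeas
    refine ⟨t, fun C hC => ?_⟩
    by_cases h0 : sat0 i x C
    · obtain ⟨ι, hι, hw, he⟩ := h0
      exact ⟨ι, hι, by rw [ge_iff_le, eval_update i ι x t, hw]; linarith⟩
    · by_cases hp : hasPos i C <;> by_cases hn : hasNeg i C
      · have hCm : C ∈ (mixPart i Pi).filter (fun C => ¬ sat0 i x C) :=
          Finset.mem_filter.2 ⟨Finset.mem_filter.2 ⟨hC, hp, hn⟩, h0⟩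
        rcases h3 C hCm with ht | ht
        · obtain ⟨ι, hι, hw, heq⟩ := exists_ubF i x hn
          exact ⟨ι, hι, (sat_neg i x hw t).2 (by rw [heq]; exact ht)⟩
        · obtain ⟨ι, hι, hw, heq⟩ := exists_lbF i x hp
          exact ⟨ι, hι, (sat_pos i x hw t).2 (by rw [heq]; exact ht)⟩
      · have hCp : C ∈ (posPart i Pi).filter (fun C => ¬ sat0 i x C) :=
          Finset.mem_filter.2 ⟨Finset.mem_filter.2 ⟨hC, hp, hn⟩, h0⟩
        obtain ⟨ι, hι, hw, heq⟩ := exists_lbF i x hp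
        exact ⟨ι, hι, (sat_pos i x hw t).2 (by rw [heq]; exact h1 C hCp)⟩
      · have hCn : C ∈ (negPart i Pi).filter (fun C => ¬ sat0 i x C) :=
          Finset.mem_filter.2 ⟨Finset.mem_filter.2 ⟨hC, hp, hn⟩, h0⟩
        obtain ⟨ι, hι, hw, heq⟩ := exists_ubF i x hn
        exact ⟨ι, hι, (sat_neg i x hw t).2 (by rw [heq]; exact h2 C hCn)⟩
      · have hCf : C ∈ elimVar i Pi :=
          Finset.mem_union.2 (Or.inl (Finset.mem_filter.2 ⟨hC, hp, hn⟩))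
        obtain ⟨ι, hι, he⟩ := hx C hCf
        have hz : ι.w i = 0 :=
          le_antisymm (not_lt.1 fun h => hp ⟨ι, hι, h⟩) (not_lt.1 fun h => hn ⟨ι, hι, h⟩)
        exact ⟨ι, hι, by rw [ge_iff_le, eval_update_zero i x t hz]; exact he⟩
  · exfalso
    obtain ⟨C₀, hC₀, L, hLM, hnd, Cn, hCn, hlink⟩ :=
      chain_lemma (lbF i x) (ubF i x) ((negPart i Pi).filter (fun C => ¬ sat0 i x C))
        ((mixPart i Pi).filter (fun C => ¬ sat0 i x C))
        ((posPart i Pi).filter (fun C => ¬ sat0 i x C)) hfeas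
    obtain ⟨hC₀p, hC₀0⟩ := Finset.mem_filter.1 hC₀
    obtain ⟨hCnn, hCn0⟩ := Finset.mem_filter.1 hCn
    have hlen : L.length ≤ (mixPart i Pi).card := by
      have hsub : L.toFinset ⊆ mixPart i Pi := fun c hc =>
        Finset.mem_of_mem_filter _ (hLM c (List.mem_toFinset.1 hc))
      calc L.length = L.toFinset.card := (List.toFinset_card_of_nodup hnd).symm
        _ ≤ _ := Finset.card_le_card hsub
    have hInv0 : Inv i x C₀ (lbF i x C₀) := by
      intro ι hι
      have hCpos : hasPos i C₀ ∧ ¬ hasNeg i C₀ := (Finset.mem_filter.1 hC₀p).2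
      refine ⟨fun hnp => ?_, fun hpos => lbF_le i x hι hpos⟩
      have hz : ι.w i = 0 := le_antisymm (not_lt.1 hnp) (not_lt.1 fun h => hCpos.2 ⟨ι, hι, h⟩)
      refine ⟨hz, ?_⟩
      by_contra h
      exact hC₀0 ⟨ι, hι, hz, not_lt.1 h⟩
    have h0 : iterRes i (mixPart i Pi) (posPart i Pi) 0 = posPart i Pi := rfl
    exact no_chain hx L C₀ 0 (lbF i x C₀) (h0 ▸ hC₀p) (by omega) hInv0
      (fun C hC => Finset.mem_filter.1 (hLM C hC)) Cn hCnn hCn0 hlink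

end DisjElim2

open DisjElim in
/-- Extendibility for disjunctive variable elimination (Lemma 3): for a finite set `Π` of
constraints over the variables `x_1,…,x_i` (no later variable occurs), `Π` and the
eliminated set `Π_{i-1} = elimVar i Π` are equisatisfiable, and every assignment
satisfying `Π_{i-1}` extends, by a suitable value of `x_i`, to one satisfying `Π`. -/
theorem stmt_12 {D : ℕ} (i : Fin D) (Pi : Finset (Constraint D))
    (hvars : ∀ C ∈ Pi, ∀ ι ∈ C, ∀ k, i < k → ι.w k = 0) :
    ((∃ x, SatAll Pi x) ↔ ∃ x, SatAll (elimVar i Pi) x) ∧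
      (∀ x, SatAll (elimVar i Pi) x → ∃ t : ℝ, SatAll Pi (Function.update x i t)) := by
  refine ⟨⟨fun ⟨x, hx⟩ => ⟨x, DisjElim2.satAll_elimVar hx⟩, fun ⟨x, hx⟩ => ?_⟩,
    fun x hx => DisjElim2.extend hx⟩
  obtain ⟨t, ht⟩ := DisjElim2.extend hx
  exact ⟨_, ht⟩
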